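/- Let S_0 and S_1 be positive semidefinite operators on a finite-dimensional complex Hilbert space and set N := S_0 + S_1. Then there exist positive semidefinite operators Q_0 and Q_1 with Q_0 + Q_1 = 1 (the identity operator) such that √N Q_0 √N = S_0 and √N Q_1 √N = S_1. -/

import Mathlib

open scoped ComplexOrder Matrix

/-- The positive semidefinite square root of a positive semidefinite matrix
(the definition `Matrix.PosSemidef.sqrt` of the older Mathlib, since removed). -/
noncomputable def Matrix.PosSemidef.sqrt {n : Type*} [Fintype n] [DecidableEq n] {𝕜 : Type*}
    [RCLike 𝕜] {A : Matrix n n 𝕜} (hA : A.PosSemidef) : Matrix n n 𝕜 :=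
  hA.1.eigenvectorUnitary.1 * Matrix.diagonal ((↑) ∘ (√·) ∘ hA.1.eigenvalues) *
  (star hA.1.eigenvectorUnitary : Matrix n n 𝕜)

namespace PMAux

open Matrix

variable {n : Type} [Fintype n] [DecidableEq n]

/-- Apply a real function to a Hermitian matrix via its spectral decomposition. -/
noncomputable def mfun {A : Matrix n n ℂ} (hA : A.IsHermitian) (f : ℝ → ℝ) : Matrix n n ℂ :=
  (hA.eigenvectorUnitary : Matrix n n ℂ) * diagonal ((↑) ∘ f ∘ hA.eigenvalues) *
    (star hA.eigenvectorUnitary : Matrix n n ℂ)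

lemma mfun_mul {A : Matrix n n ℂ} (hA : A.IsHermitian) (f g h : ℝ → ℝ)
    (hfg : ∀ i, f (hA.eigenvalues i) * g (hA.eigenvalues i) = h (hA.eigenvalues i)) :
    mfun hA f * mfun hA g = mfun hA h := by
  have hU : (star hA.eigenvectorUnitary : Matrix n n ℂ) *
      (hA.eigenvectorUnitary : Matrix n n ℂ) = 1 :=
    (Matrix.mem_unitaryGroup_iff').mp hA.eigenvectorUnitary.2
  set U : Matrix n n ℂ := (hA.eigenvectorUnitary : Matrix n n ℂ) with hUdef
  unfold mfun
  simp only [← mul_assoc, ← hUdef]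
  rw [mul_assoc (U * diagonal (Complex.ofReal ∘ f ∘ hA.eigenvalues)) (star U) U, hU, mul_one,
    mul_assoc U, diagonal_mul_diagonal]
  have hd : (fun i => (Complex.ofReal ∘ f ∘ hA.eigenvalues) i *
      (Complex.ofReal ∘ g ∘ hA.eigenvalues) i) = Complex.ofReal ∘ h ∘ hA.eigenvalues := by
    funext i
    simp only [Function.comp_apply, ← Complex.ofReal_mul, hfg i]
  rw [hd]

lemma mfun_isHermitian {A : Matrix n n ℂ} (hA : A.IsHermitian) (f : ℝ → ℝ) :
    (mfun hA f).IsHermitian := by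
  unfold mfun
  rw [Matrix.IsHermitian, conjTranspose_mul, conjTranspose_mul, diagonal_conjTranspose,
    star_eq_conjTranspose, conjTranspose_conjTranspose, ← mul_assoc]
  have hd : star (Complex.ofReal ∘ f ∘ hA.eigenvalues) =
      Complex.ofReal ∘ f ∘ hA.eigenvalues := by
    funext i
    simp [Pi.star_apply, Function.comp_apply, Complex.conj_ofReal]
  rw [hd]

lemma mfun_posSemidef {A : Matrix n n ℂ} (hA : A.IsHermitian) (f : ℝ → ℝ)
    (hf : ∀ i, 0 ≤ f (hA.eigenvalues i)) : (mfun hA f).PosSemidef := by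
  unfold mfun
  rw [star_eq_conjTranspose]
  exact (posSemidef_diagonal_iff.mpr fun i =>
    Complex.zero_le_real.mpr (hf i)).mul_mul_conjTranspose_same _

lemma sqrt_eq_mfun {A : Matrix n n ℂ} (hA : A.PosSemidef) :
    hA.sqrt = mfun hA.1 Real.sqrt := rfl

lemma psd_smul {A : Matrix n n ℂ} (hA : A.PosSemidef) {r : ℝ} (hr : 0 ≤ r) :
    ((r : ℂ) • A).PosSemidef := by
  refine .of_dotProduct_mulVec_nonneg ?_ ?_
  · unfold Matrix.IsHermitian
    rw [conjTranspose_smul, hA.1]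
    congr 1
    simp
  · intro x
    rw [smul_mulVec, dotProduct_smul]
    exact mul_nonneg (by exact_mod_cast Complex.zero_le_real.mpr hr) (hA.dotProduct_mulVec_nonneg x)

lemma psd_add_eq_zero {A B : Matrix n n ℂ} (hA : A.PosSemidef) (hB : B.PosSemidef)
    (h : A + B = 0) : A = 0 := by
  have hAv : ∀ x : n → ℂ, A *ᵥ x = 0 := by
    intro x
    rw [← hA.dotProduct_mulVec_zero_iff]
    have hsum : star x ⬝ᵥ A *ᵥ x + star x ⬝ᵥ B *ᵥ x = 0 := by
      rw [← dotProduct_add, ← add_mulVec, h, zero_mulVec, dotProduct_zero]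
    have h1 := hA.dotProduct_mulVec_nonneg x
    have h2 := hB.dotProduct_mulVec_nonneg x
    have : star x ⬝ᵥ A *ᵥ x ≤ 0 := by
      rw [← hsum]; simpa using h2
    exact le_antisymm this h1
  ext i j
  have := congrFun (hAv (Pi.single j 1)) i
  simpa [mulVec_single] using this

end PMAux

lemma Matrix.PosSemidef.posSemidef_sqrt {n : Type} [Fintype n] [DecidableEq n]
    {A : Matrix n n ℂ} (hA : A.PosSemidef) : hA.sqrt.PosSemidef :=
  PMAux.mfun_posSemidef hA.1 _ (fun _ => Real.sqrt_nonneg _)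

lemma Matrix.PosSemidef.sqrt_mul_self {n : Type} [Fintype n] [DecidableEq n]
    {A : Matrix n n ℂ} (hA : A.PosSemidef) : hA.sqrt * hA.sqrt = A := by
  rw [PMAux.sqrt_eq_mfun, PMAux.mfun_mul hA.1 _ _ id
    (fun i => Real.mul_self_sqrt (hA.eigenvalues_nonneg i))]
  unfold PMAux.mfun
  conv_rhs => rw [hA.1.spectral_theorem, Unitary.conjStarAlgAut_apply]
  rfl

namespace ProcessMatrices

/-- The trace norm (sum of singular values) of a complex square matrix. -/
noncomputable def traceNorm {n : Type} [Fintype n] [DecidableEq n] (X : Matrix n n ℂ) : ℝ :=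
  ∑ i, Real.sqrt ((Matrix.posSemidef_conjTranspose_mul_self X).isHermitian.eigenvalues i)

variable {aI aO bI bO : Type} [Fintype aI] [Fintype aO] [Fintype bI] [Fintype bO]
  [DecidableEq aI] [DecidableEq aO] [DecidableEq bI] [DecidableEq bO]
  [Nonempty aI] [Nonempty aO] [Nonempty bI] [Nonempty bO]

/-- `_{A_O} W = (1_{A_O}/dim A_O) ⊗ tr_{A_O} W`, as an operator on the full space. -/
noncomputable def rAO (W : Matrix (aI × aO × bI × bO) (aI × aO × bI × bO) ℂ) :
    Matrix (aI × aO × bI × bO) (aI × aO × bI × bO) ℂ := fun i j =>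
  (if i.2.1 = j.2.1 then ((Fintype.card aO : ℂ))⁻¹ else 0) *
    ∑ k : aO, W (i.1, k, i.2.2.1, i.2.2.2) (j.1, k, j.2.2.1, j.2.2.2)

/-- `_{B_O} W`. -/
noncomputable def rBO (W : Matrix (aI × aO × bI × bO) (aI × aO × bI × bO) ℂ) :
    Matrix (aI × aO × bI × bO) (aI × aO × bI × bO) ℂ := fun i j =>
  (if i.2.2.2 = j.2.2.2 then ((Fintype.card bO : ℂ))⁻¹ else 0) *
    ∑ k : bO, W (i.1, i.2.1, i.2.2.1, k) (j.1, j.2.1, j.2.2.1, k)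

/-- `_{A_O B_O} W`. -/
noncomputable def rAOBO (W : Matrix (aI × aO × bI × bO) (aI × aO × bI × bO) ℂ) :
    Matrix (aI × aO × bI × bO) (aI × aO × bI × bO) ℂ := fun i j =>
  (if i.2.1 = j.2.1 ∧ i.2.2.2 = j.2.2.2 then
      ((Fintype.card aO : ℂ) * (Fintype.card bO : ℂ))⁻¹ else 0) *
    ∑ k : aO, ∑ l : bO, W (i.1, k, i.2.2.1, l) (j.1, k, j.2.2.1, l)

/-- `_{A_I A_O} W`. -/
noncomputable def rAIAO (W : Matrix (aI × aO × bI × bO) (aI × aO × bI × bO) ℂ) :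
    Matrix (aI × aO × bI × bO) (aI × aO × bI × bO) ℂ := fun i j =>
  (if i.1 = j.1 ∧ i.2.1 = j.2.1 then
      ((Fintype.card aI : ℂ) * (Fintype.card aO : ℂ))⁻¹ else 0) *
    ∑ k : aI, ∑ l : aO, W (k, l, i.2.2.1, i.2.2.2) (k, l, j.2.2.1, j.2.2.2)

/-- `_{B_I B_O} W`. -/
noncomputable def rBIBO (W : Matrix (aI × aO × bI × bO) (aI × aO × bI × bO) ℂ) :
    Matrix (aI × aO × bI × bO) (aI × aO × bI × bO) ℂ := fun i j =>
  (if i.2.2.1 = j.2.2.1 ∧ i.2.2.2 = j.2.2.2 then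
      ((Fintype.card bI : ℂ) * (Fintype.card bO : ℂ))⁻¹ else 0) *
    ∑ k : bI, ∑ l : bO, W (i.1, i.2.1, k, l) (j.1, j.2.1, k, l)

/-- `_{A_I A_O B_O} W`. -/
noncomputable def rAIAOBO (W : Matrix (aI × aO × bI × bO) (aI × aO × bI × bO) ℂ) :
    Matrix (aI × aO × bI × bO) (aI × aO × bI × bO) ℂ := fun i j =>
  (if i.1 = j.1 ∧ i.2.1 = j.2.1 ∧ i.2.2.2 = j.2.2.2 then
      ((Fintype.card aI : ℂ) * (Fintype.card aO : ℂ) * (Fintype.card bO : ℂ))⁻¹ else 0) *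
    ∑ k : aI, ∑ l : aO, ∑ m : bO, W (k, l, i.2.2.1, m) (k, l, j.2.2.1, m)

/-- `_{A_O B_I B_O} W`. -/
noncomputable def rAOBIBO (W : Matrix (aI × aO × bI × bO) (aI × aO × bI × bO) ℂ) :
    Matrix (aI × aO × bI × bO) (aI × aO × bI × bO) ℂ := fun i j =>
  (if i.2.1 = j.2.1 ∧ i.2.2.1 = j.2.2.1 ∧ i.2.2.2 = j.2.2.2 then
      ((Fintype.card aO : ℂ) * (Fintype.card bI : ℂ) * (Fintype.card bO : ℂ))⁻¹ else 0) *
    ∑ k : aO, ∑ l : bI, ∑ m : bO, W (i.1, k, l, m) (j.1, k, l, m)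

/-- `W` is a process matrix. -/
structure IsProcessMatrix (W : Matrix (aI × aO × bI × bO) (aI × aO × bI × bO) ℂ) : Prop where
  posSemidef : W.PosSemidef
  condA : rAIAO W = rAIAOBO W
  condB : rBIBO W = rAOBIBO W
  condAB : W = rBO W + rAO W - rAOBO W
  traceEq : W.trace = (Fintype.card aO : ℂ) * (Fintype.card bO : ℂ)

/-- Partial trace over `A_O`. -/
noncomputable def ptrAO (N : Matrix (aI × aO × bI × bO) (aI × aO × bI × bO) ℂ) :
    Matrix (aI × bI × bO) (aI × bI × bO) ℂ := fun i j =>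
  ∑ k : aO, N (i.1, k, i.2.1, i.2.2) (j.1, k, j.2.1, j.2.2)

/-- Partial trace over `B_O`. -/
noncomputable def ptrBO (N : Matrix (aI × aO × bI × bO) (aI × aO × bI × bO) ℂ) :
    Matrix (aI × aO × bI) (aI × aO × bI) ℂ := fun i j =>
  ∑ k : bO, N (i.1, i.2.1, i.2.2, k) (j.1, j.2.1, j.2.2, k)

/-- Partial trace over `A_O ⊗ B_O`. -/
noncomputable def ptrAOBO (N : Matrix (aI × aO × bI × bO) (aI × aO × bI × bO) ℂ) :
    Matrix (aI × bI) (aI × bI) ℂ := fun i j =>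
  ∑ k : aO, ∑ l : bO, N (i.1, k, i.2, l) (j.1, k, j.2, l)

/-- `N` is the Choi matrix of a non-signaling channel. -/
structure MemNS (N : Matrix (aI × aO × bI × bO) (aI × aO × bI × bO) ℂ) : Prop where
  posSemidef : N.PosSemidef
  trChannel : ptrAOBO N = 1
  nsA : ∀ i j : aI × bI × bO, ptrAO N i j =
    (if i.1 = j.1 then ((Fintype.card aI : ℂ))⁻¹ else 0) *
      ∑ m : aI, ptrAO N (m, i.2.1, i.2.2) (m, j.2.1, j.2.2)
  nsB : ∀ i j : aI × aO × bI, ptrBO N i j =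
    (if i.2.2 = j.2.2 then ((Fintype.card bI : ℂ))⁻¹ else 0) *
      ∑ m : bI, ptrBO N (i.1, i.2.1, m) (j.1, j.2.1, m)

/-- `sup { ‖√N (W₀ - W₁) √N‖₁ : N ∈ NS }`. -/
noncomputable def discrBound (W0 W1 : Matrix (aI × aO × bI × bO) (aI × aO × bI × bO) ℂ) : ℝ :=
  sSup { x : ℝ | ∃ N : Matrix (aI × aO × bI × bO) (aI × aO × bI × bO) ℂ, ∃ hN : MemNS N,
    x = traceNorm (hN.posSemidef.sqrt * (W0 - W1) * hN.posSemidef.sqrt) }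

/-- The optimal probability of discriminating the process matrices `W0` and `W1`
over non-signaling strategies. -/
noncomputable def pSucc (W0 W1 : Matrix (aI × aO × bI × bO) (aI × aO × bI × bO) ℂ) : ℝ :=
  (1/2) * sSup { x : ℝ | ∃ S0 S1 : Matrix (aI × aO × bI × bO) (aI × aO × bI × bO) ℂ,
    S0.PosSemidef ∧ S1.PosSemidef ∧ MemNS (S0 + S1) ∧
    x = ((W0 * S0).trace + (W1 * S1).trace).re }

/-- `W` is a process matrix representing a quantum comb with causal order `A ≺ B`:
`W = W' ⊗ 1_{B_O}` with `tr_{B_I} W' = W'' ⊗ 1_{A_O}`. -/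
def MemCombAB (W : Matrix (aI × aO × bI × bO) (aI × aO × bI × bO) ℂ) : Prop :=
  IsProcessMatrix W ∧
  ∃ W' : Matrix (aI × aO × bI) (aI × aO × bI) ℂ,
    (∀ i j, W i j = (if i.2.2.2 = j.2.2.2 then 1 else 0) *
        W' (i.1, i.2.1, i.2.2.1) (j.1, j.2.1, j.2.2.1)) ∧
    ∃ W'' : Matrix aI aI ℂ, ∀ p q : aI × aO,
      (∑ k : bI, W' (p.1, p.2, k) (q.1, q.2, k)) = (if p.2 = q.2 then 1 else 0) * W'' p.1 q.1

/-- `W` is a process matrix representing a quantum comb with causal order `B ≺ A`: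
`W = W' ⊗ 1_{A_O}` (in the `A_O` slot) with `tr_{A_I} W' = W'' ⊗ 1_{B_O}`. -/
def MemCombBA (W : Matrix (aI × aO × bI × bO) (aI × aO × bI × bO) ℂ) : Prop :=
  IsProcessMatrix W ∧
  ∃ W' : Matrix (aI × bI × bO) (aI × bI × bO) ℂ,
    (∀ i j, W i j = (if i.2.1 = j.2.1 then 1 else 0) *
        W' (i.1, i.2.2.1, i.2.2.2) (j.1, j.2.2.1, j.2.2.2)) ∧
    ∃ W'' : Matrix bI bI ℂ, ∀ p q : bI × bO,
      (∑ k : aI, W' (k, p.1, p.2) (k, q.1, q.2)) = (if p.2 = q.2 then 1 else 0) * W'' p.1 q.1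

/-- `W` is a free process matrix: `W = ρ ⊗ 1_{A_O ⊗ B_O}` for a density operator `ρ`. -/
def MemFree (W : Matrix (aI × aO × bI × bO) (aI × aO × bI × bO) ℂ) : Prop :=
  ∃ ρ : Matrix (aI × bI) (aI × bI) ℂ, ρ.PosSemidef ∧ ρ.trace = 1 ∧
    ∀ i j, W i j = (if i.2.1 = j.2.1 ∧ i.2.2.2 = j.2.2.2 then 1 else 0) *
      ρ (i.1, i.2.2.1) (j.1, j.2.2.1)

/-- `W` is a causally separable process matrix. -/
def MemSep (W : Matrix (aI × aO × bI × bO) (aI × aO × bI × bO) ℂ) : Prop :=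
  ∃ p : ℝ, 0 ≤ p ∧ p ≤ 1 ∧ ∃ W1 W2 : Matrix (aI × aO × bI × bO) (aI × aO × bI × bO) ℂ,
    MemCombAB W1 ∧ MemCombBA W2 ∧ W = (p : ℂ) • W1 + ((1 - p : ℝ) : ℂ) • W2

/-- `(L0, L1)` is an adaptive tester for the causal order `A ≺ B`. -/
structure IsAdaptiveTester (L0 L1 : Matrix (aI × aO × bI × bO) (aI × aO × bI × bO) ℂ) :
    Prop where
  posSemidef0 : L0.PosSemidef
  posSemidef1 : L1.PosSemidef
  comb : ∃ J : Matrix (aI × aO) (aI × aO) ℂ, J.PosSemidef ∧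
    (∀ p q : aI, (∑ k : aO, J (p, k) (q, k)) = if p = q then 1 else 0) ∧
    ∀ i j : aI × aO × bI, ptrBO (L0 + L1) i j =
      (if i.2.2 = j.2.2 then 1 else 0) * J (i.1, i.2.1) (j.1, j.2.1)

/-- The optimal probability of discriminating `W0` and `W1` over adaptive testers. -/
noncomputable def pAdapt (W0 W1 : Matrix (aI × aO × bI × bO) (aI × aO × bI × bO) ℂ) : ℝ :=
  (1/2) * sSup { x : ℝ | ∃ L0 L1 : Matrix (aI × aO × bI × bO) (aI × aO × bI × bO) ℂ,
    IsAdaptiveTester L0 L1 ∧ x = ((W0 * L0).trace + (W1 * L1).trace).re }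


open Matrix PMAux in
/-- For positive semidefinite `S0, S1` with `N := S0 + S1`, there exist
positive semidefinite `Q0, Q1` with `Q0 + Q1 = 1` such that `√N Qᵢ √N = Sᵢ`. -/
theorem statement2 {n : Type} [Fintype n] [DecidableEq n]
    (S0 S1 : Matrix n n ℂ) (h0 : S0.PosSemidef) (h1 : S1.PosSemidef) :
    ∃ Q0 Q1 : Matrix n n ℂ, Q0.PosSemidef ∧ Q1.PosSemidef ∧ Q0 + Q1 = 1 ∧
      (h0.add h1).sqrt * Q0 * (h0.add h1).sqrt = S0 ∧
      (h0.add h1).sqrt * Q1 * (h0.add h1).sqrt = S1 := by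
  have hN : (S0 + S1).PosSemidef := h0.add h1
  set R : Matrix n n ℂ := hN.sqrt with hR
  -- pseudo-inverse of √N and the range projection
  set g : ℝ → ℝ := fun x => if x = 0 then 0 else (Real.sqrt x)⁻¹ with hg
  set p : ℝ → ℝ := fun x => if x = 0 then 0 else 1 with hp
  set T : Matrix n n ℂ := mfun hN.1 g with hT
  set P : Matrix n n ℂ := mfun hN.1 p with hP
  have hev : ∀ i, 0 ≤ hN.1.eigenvalues i := hN.eigenvalues_nonneg
  have hsg : ∀ i, Real.sqrt (hN.1.eigenvalues i) * g (hN.1.eigenvalues i)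
      = p (hN.1.eigenvalues i) := by
    intro i
    by_cases h : hN.1.eigenvalues i = 0
    · simp [hg, hp, h]
    · have : Real.sqrt (hN.1.eigenvalues i) ≠ 0 :=
        Real.sqrt_ne_zero'.mpr (lt_of_le_of_ne (hev i) (Ne.symm h))
      simp [hg, hp, h, mul_inv_cancel₀ this]
  have hgs : ∀ i, g (hN.1.eigenvalues i) * Real.sqrt (hN.1.eigenvalues i)
      = p (hN.1.eigenvalues i) := fun i => by rw [mul_comm]; exact hsg i
  have hps : ∀ i, p (hN.1.eigenvalues i) * Real.sqrt (hN.1.eigenvalues i)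
      = Real.sqrt (hN.1.eigenvalues i) := by
    intro i
    by_cases h : hN.1.eigenvalues i = 0 <;> simp [hp, h]
  have hpp : ∀ i, p (hN.1.eigenvalues i) * p (hN.1.eigenvalues i)
      = p (hN.1.eigenvalues i) := by
    intro i; by_cases h : hN.1.eigenvalues i = 0 <;> simp [hp, h]
  have hPH : P.IsHermitian := mfun_isHermitian hN.1 p
  have hTH : T.IsHermitian := mfun_isHermitian hN.1 g
  have hRT : R * T = P := mfun_mul hN.1 _ _ _ hsg
  have hTR : T * R = P := mfun_mul hN.1 _ _ _ hgs
  have hPR : P * R = R := mfun_mul hN.1 _ _ _ hps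
  have hRH : Rᴴ = R := by rw [hR]; exact hN.posSemidef_sqrt.1.eq
  have hRP : R * P = R := by
    have h' := congrArg Matrix.conjTranspose hPR
    rwa [conjTranspose_mul, hPH.eq, hRH] at h' 
  have hPP : P * P = P := mfun_mul hN.1 _ _ _ hpp
  -- 1 - P facts
  have h1PH : ((1 : Matrix n n ℂ) - P).IsHermitian := by
    rw [Matrix.IsHermitian, conjTranspose_sub, conjTranspose_one, hPH.eq]
  have hR1P : R * (1 - P) = 0 := by rw [mul_sub, mul_one, hRP, sub_self]
  have h1PR : (1 - P) * R = 0 := by rw [sub_mul, one_mul, hPR, sub_self]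
  -- kill the kernel part of S0, S1
  have hkill : ∀ (S : Matrix n n ℂ) (hS : S.PosSemidef)
      (hother : Matrix n n ℂ) (hOther : hother.PosSemidef) (hSum : S + hother = S0 + S1),
      S * P = S ∧ P * S = S := by
    intro S hS S' hS' hSum
    have hzero : (1 - P) * S * (1 - P) + (1 - P) * S' * (1 - P) = 0 := by
      have : (1 - P) * (S + S') * (1 - P) = 0 := by
        rw [hSum, ← hN.sqrt_mul_self, ← hR, ← mul_assoc, mul_assoc (1 - P) R R,
          ← mul_assoc (1-P) R, h1PR, zero_mul, zero_mul]
      calc (1 - P) * S * (1 - P) + (1 - P) * S' * (1 - P)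
          = (1 - P) * (S + S') * (1 - P) := by rw [mul_add, add_mul]
        _ = 0 := this
    have hpsd1 : ((1 - P) * S * (1 - P)).PosSemidef := by
      have := hS.mul_mul_conjTranspose_same (1 - P)
      rwa [h1PH.eq] at this
    have hpsd2 : ((1 - P) * S' * (1 - P)).PosSemidef := by
      have := hS'.mul_mul_conjTranspose_same (1 - P)
      rwa [h1PH.eq] at this
    have hzero1 : (1 - P) * S * (1 - P) = 0 := psd_add_eq_zero hpsd1 hpsd2 hzero
    have hX : hS.sqrt * (1 - P) = 0 := by
      have : (hS.sqrt * (1 - P))ᴴ * (hS.sqrt * (1 - P)) = 0 := by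
        rw [conjTranspose_mul, h1PH.eq, hS.posSemidef_sqrt.1.eq, mul_assoc,
          ← mul_assoc hS.sqrt, hS.sqrt_mul_self, ← mul_assoc]
        exact hzero1
      exact conjTranspose_mul_self_eq_zero.mp this
    have hS1P : S * (1 - P) = 0 := by
      rw [← hS.sqrt_mul_self, mul_assoc, hX, mul_zero]
    constructor
    · have := sub_eq_zero.mp (by rwa [mul_sub, mul_one] at hS1P)
      exact this.symm
    · have := congrArg Matrix.conjTranspose hS1P
      rw [conjTranspose_mul, h1PH.eq, hS.1.eq, conjTranspose_zero] at this
      have := sub_eq_zero.mp (by rwa [sub_mul, one_mul] at this)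
      exact this.symm
  obtain ⟨hS0P, hPS0⟩ := hkill S0 h0 S1 h1 rfl
  obtain ⟨hS1P, hPS1⟩ := hkill S1 h1 S0 h0 (add_comm S1 S0)
  -- the candidates
  have h1Ppsd : ((1 : Matrix n n ℂ) - P).PosSemidef := by
    have : (1 - P) = ((1 : Matrix n n ℂ) - P)ᴴ * (1 - P) := by
      rw [h1PH.eq, mul_sub, mul_one, sub_mul, one_mul, hPP]
      abel
    rw [this]
    exact posSemidef_conjTranspose_mul_self _
  refine ⟨T * S0 * T + ((1/2 : ℝ) : ℂ) • (1 - P),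
         T * S1 * T + ((1/2 : ℝ) : ℂ) • (1 - P), ?_, ?_, ?_, ?_, ?_⟩
  · refine Matrix.PosSemidef.add ?_ (psd_smul h1Ppsd (by norm_num))
    have := h0.mul_mul_conjTranspose_same T
    rwa [hTH.eq] at this
  · refine Matrix.PosSemidef.add ?_ (psd_smul h1Ppsd (by norm_num))
    have := h1.mul_mul_conjTranspose_same T
    rwa [hTH.eq] at this
  · have hTNT : T * S0 * T + T * S1 * T = P := by
      have : T * (S0 + S1) * T = P := by
        rw [← hN.sqrt_mul_self, ← hR, ← mul_assoc, hTR, mul_assoc, hRT,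
          hPP]
      rw [← this, mul_add, add_mul]
    calc T * S0 * T + ((1/2 : ℝ) : ℂ) • (1 - P) + (T * S1 * T + ((1/2 : ℝ) : ℂ) • (1 - P))
        = (T * S0 * T + T * S1 * T) + (((1/2 : ℝ) : ℂ) + ((1/2 : ℝ) : ℂ)) • (1 - P) := by
          rw [add_smul]; abel
      _ = P + (1 : ℂ) • (1 - P) := by rw [hTNT]; norm_num
      _ = 1 := by rw [one_smul]; abel
  · show R * (T * S0 * T + ((1/2 : ℝ) : ℂ) • (1 - P)) * R = S0
    rw [mul_add, add_mul, Matrix.mul_smul, Matrix.smul_mul, hR1P, zero_mul, smul_zero, add_zero,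
      ← mul_assoc, ← mul_assoc, hRT, mul_assoc, mul_assoc, hTR, ← mul_assoc, hPS0, hS0P]
  · show R * (T * S1 * T + ((1/2 : ℝ) : ℂ) • (1 - P)) * R = S1
    rw [mul_add, add_mul, Matrix.mul_smul, Matrix.smul_mul, hR1P, zero_mul, smul_zero, add_zero,
      ← mul_assoc, ← mul_assoc, hRT, mul_assoc, mul_assoc, hTR, ← mul_assoc, hPS1, hS1P]


end ProcessMatrices
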